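/- Let P be a regular poset on [n] and let i ∈ [n-1]. If i and i+1 are comparable in P but (i,i+1) is not a covering pair, then the poset s_i · P (obtained by swapping the labels i and i+1) is also regular. -/
import Mathlib


/-- The adjacent transposition `s_i` of `Fin n` (0-indexed), swapping `i` and `i+1`. -/
def adj (n i : ℕ) (h : i + 1 < n) : Equiv.Perm (Fin n) :=
  Equiv.swap ⟨i, Nat.lt_of_succ_lt h⟩ ⟨i + 1, h⟩

/-- A poset with ground set `Fin n` (`[n]`, 0-indexed). -/
structure FinPoset (n : ℕ) where
  le : Fin n → Fin n → Prop
  refl : ∀ a, le a a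
  trans : ∀ a b c, le a b → le b c → le a c
  antisymm : ∀ a b, le a b → le b a → a = b

/-- `Σ_L(P)`: the permutations `σ` with `σ(i) ≤ σ(j)` whenever `i ≼_P j`. -/
def SigmaL {n : ℕ} (P : FinPoset n) : Set (Equiv.Perm (Fin n)) :=
  {σ | ∀ i j : Fin n, P.le i j → σ i ≤ σ j}

/-- `P` is regular: whenever `x ≼_P z` and `y` lies strictly between `x` and `z` in the
integer order, `x ≼_P y` or `y ≼_P z`. -/
def Regular {n : ℕ} (P : FinPoset n) : Prop :=
  ∀ x y z : Fin n, P.le x z → ((x < y ∧ y < z) ∨ (z < y ∧ y < x)) →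
    P.le x y ∨ P.le y z

/-- The poset `σ · P`, obtained by relabelling: `i ≼ j` iff `σ⁻¹(i) ≼_P σ⁻¹(j)`. -/
def permPoset {n : ℕ} (σ : Equiv.Perm (Fin n)) (P : FinPoset n) : FinPoset n where
  le i j := P.le (σ⁻¹ i) (σ⁻¹ j)
  refl _ := P.refl _
  trans _ _ _ h1 h2 := P.trans _ _ _ h1 h2
  antisymm _ _ h1 h2 := σ⁻¹.injective (P.antisymm _ _ h1 h2)

/-- `b` covers `a` in `P`. -/
def Covers {n : ℕ} (P : FinPoset n) (a b : Fin n) : Prop :=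
  a ≠ b ∧ P.le a b ∧ ¬ ∃ c, c ≠ a ∧ c ≠ b ∧ P.le a c ∧ P.le c b

/-- `a` and `b` are comparable in `P`. -/
def Cmp {n : ℕ} (P : FinPoset n) (a b : Fin n) : Prop :=
  P.le a b ∨ P.le b a


/-- Pure arithmetic core: the swap of `i, i+1` preserves strict betweenness unless the
pair `{i, i+1}` occurs among consecutive entries. -/
lemma swap_between_nat (i xv yv zv x' y' z' : ℕ)
    (hbet : xv < yv ∧ yv < zv ∨ zv < yv ∧ yv < xv)
    (hx : xv = i ∧ x' = i + 1 ∨ xv = i + 1 ∧ x' = i ∨ ¬xv = i ∧ ¬xv = i + 1 ∧ x' = xv)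
    (hy : yv = i ∧ y' = i + 1 ∨ yv = i + 1 ∧ y' = i ∨ ¬yv = i ∧ ¬yv = i + 1 ∧ y' = yv)
    (hz : zv = i ∧ z' = i + 1 ∨ zv = i + 1 ∧ z' = i ∨ ¬zv = i ∧ ¬zv = i + 1 ∧ z' = zv)
    (h1 : ¬(xv = i ∧ yv = i + 1)) (h2 : ¬(yv = i ∧ zv = i + 1))
    (h3 : ¬(xv = i + 1 ∧ yv = i)) (h4 : ¬(yv = i + 1 ∧ zv = i)) :
    x' < y' ∧ y' < z' ∨ z' < y' ∧ y' < x' := by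
  rcases hx with ⟨e1, e2⟩ | ⟨e1, e2⟩ | ⟨e1, e2, e3⟩ <;>
    rcases hy with ⟨f1, f2⟩ | ⟨f1, f2⟩ | ⟨f1, f2, f3⟩ <;>
      rcases hz with ⟨g1, g2⟩ | ⟨g1, g2⟩ | ⟨g1, g2, g3⟩ <;> omega

set_option maxHeartbeats 1000000 in
/-- If `i` and `i+1` are comparable in a regular poset `P` on `[n]` but
`(i, i+1)` is not a covering pair, then the relabelled poset `s_i · P` is also regular. -/
theorem stmt7 (n : ℕ) (P : FinPoset n) (hP : Regular P) (i : ℕ) (h : i + 1 < n)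
    (hcmp : Cmp P ⟨i, Nat.lt_of_succ_lt h⟩ ⟨i + 1, h⟩)
    (hnc₁ : ¬ Covers P ⟨i, Nat.lt_of_succ_lt h⟩ ⟨i + 1, h⟩)
    (hnc₂ : ¬ Covers P ⟨i + 1, h⟩ ⟨i, Nat.lt_of_succ_lt h⟩) :
    Regular (permPoset (adj n i h) P) := by
  set a : Fin n := ⟨i, Nat.lt_of_succ_lt h⟩ with ha
  set b : Fin n := ⟨i + 1, h⟩ with hb
  have hav : a.val = i := rfl
  have hbv : b.val = i + 1 := rfl
  intro x y z hxz hbet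
  have hsinv : (adj n i h)⁻¹ = Equiv.swap a b := by
    simp [adj, ha, hb]
  have hxz' : P.le (Equiv.swap a b x) (Equiv.swap a b z) := by
    simpa only [permPoset, hsinv] using hxz
  have goal_eq : ((permPoset (adj n i h) P).le x y ∨ (permPoset (adj n i h) P).le y z) ↔
      (P.le (Equiv.swap a b x) (Equiv.swap a b y) ∨
        P.le (Equiv.swap a b y) (Equiv.swap a b z)) := by
    simp only [permPoset, hsinv]
  rw [goal_eq]
  have hcmp' : P.le a b ∨ P.le b a := hcmp
  have hbetv : (x.val < y.val ∧ y.val < z.val) ∨ (z.val < y.val ∧ y.val < x.val) := hbet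
  by_cases hc : (x = a ∧ y = b) ∨ (y = a ∧ z = b) ∨ (x = b ∧ y = a) ∨ (y = b ∧ z = a)
  · rcases hc with ⟨rfl, rfl⟩ | ⟨rfl, rfl⟩ | ⟨rfl, rfl⟩ | ⟨rfl, rfl⟩
    · -- x = a, y = b : z > b
      have hza : z ≠ a := fun hE => by
        have := congrArg Fin.val hE; rw [hav] at this; omega
      have hzb : z ≠ b := fun hE => by
        have := congrArg Fin.val hE; rw [hbv] at this; omega
      simp only [Equiv.swap_apply_left, Equiv.swap_apply_right,
        Equiv.swap_apply_of_ne_of_ne hza hzb] at hxz' ⊢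
      rcases hcmp' with hab | hba
      · exact Or.inr (P.trans _ _ _ hab hxz')
      · exact Or.inl hba
    · -- y = a, z = b : x < a
      have hxa : x ≠ a := fun hE => by
        have := congrArg Fin.val hE; rw [hav] at this; omega
      have hxb : x ≠ b := fun hE => by
        have := congrArg Fin.val hE; rw [hbv] at this; omega
      simp only [Equiv.swap_apply_left, Equiv.swap_apply_right,
        Equiv.swap_apply_of_ne_of_ne hxa hxb] at hxz' ⊢
      rcases hcmp' with hab | hba
      · exact Or.inl (P.trans _ _ _ hxz' hab)
      · exact Or.inr hba
    · -- x = b, y = a : z < a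
      have hza : z ≠ a := fun hE => by
        have := congrArg Fin.val hE; rw [hav] at this; omega
      have hzb : z ≠ b := fun hE => by
        have := congrArg Fin.val hE; rw [hbv] at this; omega
      simp only [Equiv.swap_apply_left, Equiv.swap_apply_right,
        Equiv.swap_apply_of_ne_of_ne hza hzb] at hxz' ⊢
      rcases hcmp' with hab | hba
      · exact Or.inl hab
      · exact Or.inr (P.trans _ _ _ hba hxz')
    · -- y = b, z = a : x > b
      have hxa : x ≠ a := fun hE => by
        have := congrArg Fin.val hE; rw [hav] at this; omega
      have hxb : x ≠ b := fun hE => by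
        have := congrArg Fin.val hE; rw [hbv] at this; omega
      simp only [Equiv.swap_apply_left, Equiv.swap_apply_right,
        Equiv.swap_apply_of_ne_of_ne hxa hxb] at hxz' ⊢
      rcases hcmp' with hab | hba
      · exact Or.inr hab
      · exact Or.inl (P.trans _ _ _ hxz' hba)
  · -- betweenness is preserved by the swap
    have hsw : ∀ u : Fin n, (u.val = i ∧ (Equiv.swap a b u).val = i + 1) ∨
        (u.val = i + 1 ∧ (Equiv.swap a b u).val = i) ∨
        (u.val ≠ i ∧ u.val ≠ i + 1 ∧ (Equiv.swap a b u).val = u.val) := by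
      intro u
      rcases eq_or_ne u a with rfl | hua
      · exact Or.inl ⟨hav, by rw [Equiv.swap_apply_left]⟩
      · rcases eq_or_ne u b with rfl | hub
        · exact Or.inr (Or.inl ⟨hbv, by rw [Equiv.swap_apply_right]⟩)
        · refine Or.inr (Or.inr ⟨fun hE => hua (Fin.ext (hE.trans hav.symm)),
            fun hE => hub (Fin.ext (hE.trans hbv.symm)),
            by rw [Equiv.swap_apply_of_ne_of_ne hua hub]⟩)
    have h1 : ¬(x.val = i ∧ y.val = i + 1) := fun ⟨e, f⟩ =>
      hc (Or.inl ⟨Fin.ext (e.trans hav.symm), Fin.ext (f.trans hbv.symm)⟩)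
    have h2 : ¬(y.val = i ∧ z.val = i + 1) := fun ⟨e, f⟩ =>
      hc (Or.inr (Or.inl ⟨Fin.ext (e.trans hav.symm), Fin.ext (f.trans hbv.symm)⟩))
    have h3 : ¬(x.val = i + 1 ∧ y.val = i) := fun ⟨e, f⟩ =>
      hc (Or.inr (Or.inr (Or.inl ⟨Fin.ext (e.trans hbv.symm), Fin.ext (f.trans hav.symm)⟩)))
    have h4 : ¬(y.val = i + 1 ∧ z.val = i) := fun ⟨e, f⟩ =>
      hc (Or.inr (Or.inr (Or.inr ⟨Fin.ext (e.trans hbv.symm), Fin.ext (f.trans hav.symm)⟩)))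
    have hx := hsw x; have hy := hsw y; have hz := hsw z
    refine hP _ _ _ hxz' ?_
    have hfin := swap_between_nat i x.val y.val z.val (Equiv.swap a b x).val
      (Equiv.swap a b y).val (Equiv.swap a b z).val hbetv hx hy hz h1 h2 h3 h4
    exact hfin
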